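/- Let D be a directed graph whose vertices are linearly ordered, and let P = {V_1,...,V_l} be a partition of the vertex set into intervals of the ordering. Let A_B be the arcs with endpoints in different intervals and A_I the arcs with both endpoints in the same interval. Suppose every backward arc f = vu of D[A_B] admits a certificate: a directed path from u to v using only forward arcs of A_B within the span of f, and these certificates are pairwise arc-disjoint. Then fas(D) = fas(D[A_I]) + fas(D[A_B]). -/

import Mathlib

/-- A tournament: irreflexive, and exactly one arc between every pair of distinct vertices. -/
def IsTournament {V : Type*} (r : V → V → Prop) : Prop :=
  (∀ v, ¬ r v v) ∧ ∀ u v : V, u ≠ v → (r u v ↔ ¬ r v u)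

/-- A digraph (given by its arc relation) is acyclic: no directed cycle. -/
def Acyclic {V : Type*} (r : V → V → Prop) : Prop :=
  ∀ v, ¬ Relation.TransGen r v v

/-- The minimum size of a feedback arc set of the digraph given by relation `r`. -/
noncomputable def fas {V : Type*} (r : V → V → Prop) : ℕ :=
  sInf {n : ℕ | ∃ F : Finset (V × V), F.card = n ∧
    Acyclic (fun a b => r a b ∧ (a, b) ∉ F)}

open Relation Finset

private lemma transGen_le_pot {α} {r : α → α → Prop} {f : α → ℕ}
    (hf : ∀ a b, r a b → f a ≤ f b) {v w} (h : TransGen r v w) : f v ≤ f w := by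
  induction h with
  | single h => exact hf _ _ h
  | tail _ h ih => exact ih.trans (hf _ _ h)

private lemma transGen_restrict_pot {α} {r : α → α → Prop} {f : α → ℕ}
    (hf : ∀ a b, r a b → f a ≤ f b) {v w} (h : TransGen r v w) :
    f w ≤ f v → TransGen (fun a b => r a b ∧ f a = f b) v w := by
  induction h with
  | single h => exact fun hw => TransGen.single ⟨h, le_antisymm (hf _ _ h) hw⟩
  | @tail a w hva hab ih =>
      intro hw
      have h1 : f v ≤ f a := transGen_le_pot hf hva
      have h2 : f a ≤ f w := hf _ _ hab
      exact (ih (h2.trans hw)).tail ⟨hab, le_antisymm h2 (hw.trans h1)⟩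

private lemma acyclic_of_lt' {α} [Preorder α] {r : α → α → Prop}
    (h : ∀ a b, r a b → a < b) : Acyclic r := by
  intro v hv
  have key : ∀ w, TransGen r v w → v < w := by
    intro w hw
    induction hw with
    | single h' => exact h _ _ h'
    | tail _ h' ih => exact ih.trans (h _ _ h')
  exact lt_irrefl v (key v hv)

private lemma acyclic_mono' {α} {r s : α → α → Prop} (h : ∀ a b, r a b → s a b)
    (hs : Acyclic s) : Acyclic r := fun v hv => hs v (TransGen.mono h _ _ hv)

private lemma fas_le' {α} (r : α → α → Prop) (F : Finset (α × α))
    (h : Acyclic fun a b => r a b ∧ (a, b) ∉ F) : fas r ≤ F.card :=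
  Nat.sInf_le ⟨F, rfl, h⟩

private lemma fas_mem' {α} [Fintype α] [DecidableEq α] (r : α → α → Prop) :
    ∃ F : Finset (α × α), F.card = fas r ∧ Acyclic fun a b => r a b ∧ (a, b) ∉ F := by
  have hne : {m : ℕ | ∃ F : Finset (α × α), F.card = m ∧
      Acyclic fun a b => r a b ∧ (a, b) ∉ F}.Nonempty := by
    refine ⟨(Finset.univ : Finset (α × α)).card, Finset.univ, rfl, ?_⟩
    intro v hv
    cases hv with
    | single h => exact h.2 (Finset.mem_univ _)
    | tail _ h => exact h.2 (Finset.mem_univ _)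
  obtain ⟨F, hF, hA⟩ := Nat.sInf_mem hne
  exact ⟨F, hF, hA⟩

/-- Safe partition lemma: if every backward arc of `D[A_B]` has a certificate (a directed
path of forward arcs of `A_B` within its span), with all certificates pairwise arc-disjoint,
then `fas(D) = fas(D[A_I]) + fas(D[A_B])`. Vertices are ordered as `Fin n`; the intervals
of the partition are the fibers of the monotone map `part`. -/
theorem stmt6 (n : ℕ) (r : Fin n → Fin n → Prop) (part : Fin n → ℕ)
    (hmono : Monotone part)
    (C : Fin n × Fin n → Set (Fin n × Fin n))
    (hsub : ∀ f : Fin n × Fin n, r f.1 f.2 → part f.1 ≠ part f.2 → f.2 < f.1 →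
      C f ⊆ {e : Fin n × Fin n |
        r e.1 e.2 ∧ part e.1 ≠ part e.2 ∧ e.1 < e.2 ∧ f.2 ≤ e.1 ∧ e.2 ≤ f.1})
    (hpath : ∀ f : Fin n × Fin n, r f.1 f.2 → part f.1 ≠ part f.2 → f.2 < f.1 →
      Relation.ReflTransGen (fun x y => (x, y) ∈ C f) f.2 f.1)
    (hdisj : ∀ f g : Fin n × Fin n, r f.1 f.2 → part f.1 ≠ part f.2 → f.2 < f.1 →
      r g.1 g.2 → part g.1 ≠ part g.2 → g.2 < g.1 → f ≠ g → Disjoint (C f) (C g)) :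
    fas r = fas (fun a b => r a b ∧ part a = part b) +
            fas (fun a b => r a b ∧ part a ≠ part b) := by
  classical
  set rI : Fin n → Fin n → Prop := fun a b => r a b ∧ part a = part b with hrI
  set rB : Fin n → Fin n → Prop := fun a b => r a b ∧ part a ≠ part b with hrB
  -- the set of backward cross arcs
  set B : Finset (Fin n × Fin n) :=
    Finset.univ.filter (fun f => r f.1 f.2 ∧ part f.1 ≠ part f.2 ∧ f.2 < f.1) with hB
  have hBmem : ∀ f : Fin n × Fin n, f ∈ B ↔
      r f.1 f.2 ∧ part f.1 ≠ part f.2 ∧ f.2 < f.1 := by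
    intro f; simp [hB]
  -- cross arcs not in B are strictly forward
  have hforward : ∀ a b : Fin n, r a b → part a ≠ part b → (a, b) ∉ B → a < b := by
    intro a b hr hne hnB
    have hab : a ≠ b := fun h => hne (h ▸ rfl)
    have : ¬ b < a := fun h => hnB ((hBmem (a, b)).2 ⟨hr, hne, h⟩)
    exact lt_of_le_of_ne (le_of_not_gt this) hab
  -- the "hitting" lemma: any feedback arc set of a relation containing all cross arcs of r
  -- must hit {f} ∪ C f for every backward arc f ∈ B
  have hhit : ∀ (r' : Fin n → Fin n → Prop),
      (∀ a b, r a b → part a ≠ part b → r' a b) →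
      ∀ (F : Finset (Fin n × Fin n)), Acyclic (fun a b => r' a b ∧ (a, b) ∉ F) →
      ∀ f ∈ B, ∃ e, e ∈ F ∧ (e = f ∨ e ∈ C f) := by
    intro r' hr' F hA f hf
    obtain ⟨hrf, hnef, hltf⟩ := (hBmem f).1 hf
    by_contra hcon
    push_neg at hcon
    have hpath' : ReflTransGen (fun a b => r' a b ∧ (a, b) ∉ F) f.2 f.1 := by
      refine ReflTransGen.mono ?_ _ _ (hpath f hrf hnef hltf)
      intro a b hab
      obtain ⟨hre, hnee, _, _, _⟩ := hsub f hrf hnef hltf hab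
      refine ⟨hr' _ _ hre hnee, fun hmem => ?_⟩
      exact ((hcon _ hmem).2) hab
    have hstep : (fun a b => r' a b ∧ (a, b) ∉ F) f.1 f.2 := by
      refine ⟨hr' _ _ hrf hnef, fun hmem => ?_⟩
      exact (hcon _ hmem).1 (by simp)
    exact hA f.2 (TransGen.tail' hpath' hstep)
  -- injectivity of any choice of hitting arcs
  have hchoice : ∀ (F : Finset (Fin n × Fin n)),
      (∀ f ∈ B, ∃ e, e ∈ F ∧ (e = f ∨ e ∈ C f)) →
      B.card ≤ (F.filter (fun e => ¬ part e.1 = part e.2)).card := by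
    intro F hex
    have hex' : ∀ f : Fin n × Fin n, ∃ e, f ∈ B → e ∈ F ∧ (e = f ∨ e ∈ C f) := by
      intro f
      by_cases hf : f ∈ B
      · obtain ⟨e, he⟩ := hex f hf; exact ⟨e, fun _ => he⟩
      · exact ⟨f, fun h => absurd h hf⟩
    choose φ hφ using hex'
    refine Finset.card_le_card_of_injOn φ ?_ ?_
    · intro f hf
      obtain ⟨hmem, hcase⟩ := hφ f hf
      obtain ⟨hrf, hnef, hltf⟩ := (hBmem f).1 hf
      rcases hcase with h | h
      · exact Finset.mem_filter.2 ⟨hmem, by rw [h]; exact hnef⟩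
      · obtain ⟨_, hne, _, _, _⟩ := hsub f hrf hnef hltf h
        exact Finset.mem_filter.2 ⟨hmem, hne⟩
    · intro f hf g hg hfg
      by_contra hne
      obtain ⟨hmf, hcf⟩ := hφ f (by simpa using hf)
      obtain ⟨hmg, hcg⟩ := hφ g (by simpa using hg)
      obtain ⟨hrf, hnef, hltf⟩ := (hBmem f).1 (by simpa using hf)
      obtain ⟨hrg, hneg, hltg⟩ := (hBmem g).1 (by simpa using hg)
      rcases hcf with h1 | h1 <;> rcases hcg with h2 | h2
      · exact hne (h1 ▸ h2 ▸ hfg)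
      · -- φ f = f, φ g ∈ C g; but f is backward, C g arcs forward
        obtain ⟨_, _, hlt, _, _⟩ := hsub g hrg hneg hltg h2
        rw [← hfg, h1] at hlt
        exact absurd hltf (asymm hlt)
      · obtain ⟨_, _, hlt, _, _⟩ := hsub f hrf hnef hltf h1
        rw [hfg, h2] at hlt
        exact absurd hltg (asymm hlt)
      · have := hdisj f g hrf hnef hltf hrg hneg hltg hne
        exact (Set.disjoint_left.mp this h1) (hfg ▸ h2)
  -- ========== fas rB = B.card ==========
  have hrBle : fas rB ≤ B.card := by
    refine fas_le' rB B ?_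
    refine acyclic_of_lt' ?_
    rintro a b ⟨⟨hr, hne⟩, hnB⟩
    exact hforward a b hr hne hnB
  have hrBge : B.card ≤ fas rB := by
    obtain ⟨G, hGcard, hGA⟩ := fas_mem' rB
    have hex := hhit rB (fun a b h hne => ⟨h, hne⟩) G hGA
    calc B.card ≤ (G.filter (fun e => ¬ part e.1 = part e.2)).card := hchoice G hex
      _ ≤ G.card := Finset.card_filter_le _ _
      _ = fas rB := hGcard
  -- ========== fas r ≤ fas rI + B.card ==========
  have hle : fas r ≤ fas rI + B.card := by
    obtain ⟨FI, hFIcard, hFIA⟩ := fas_mem' rI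
    have hacyc : Acyclic (fun a b => r a b ∧ (a, b) ∉ FI ∪ B) := by
      intro v hv
      have hpot : ∀ a b : Fin n, (r a b ∧ (a, b) ∉ FI ∪ B) → part a ≤ part b := by
        rintro a b ⟨hr, hmem⟩
        by_cases hne : part a = part b
        · exact le_of_eq hne
        · have : a < b := hforward a b hr hne (fun h => hmem (Finset.mem_union_right _ h))
          exact hmono this.le
      have hcyc := transGen_restrict_pot hpot hv (le_refl _)
      refine hFIA v (TransGen.mono ?_ _ _ hcyc)
      rintro a b ⟨⟨hr, hmem⟩, heq⟩
      exact ⟨⟨hr, heq⟩, fun h => hmem (Finset.mem_union_left _ h)⟩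
    calc fas r ≤ (FI ∪ B).card := fas_le' r (FI ∪ B) hacyc
      _ ≤ FI.card + B.card := Finset.card_union_le _ _
      _ = fas rI + B.card := by rw [hFIcard]
  -- ========== fas r ≥ fas rI + B.card ==========
  have hge : fas rI + B.card ≤ fas r := by
    obtain ⟨F, hFcard, hFA⟩ := fas_mem' r
    set FI := F.filter (fun e => part e.1 = part e.2) with hFI
    have h1 : fas rI ≤ FI.card := by
      refine fas_le' rI FI ?_
      refine acyclic_mono' ?_ hFA
      rintro a b ⟨⟨hr, heq⟩, hmem⟩
      exact ⟨hr, fun h => hmem (Finset.mem_filter.2 ⟨h, heq⟩)⟩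
    have hex := hhit r (fun a b h _ => h) F hFA
    have h2 : B.card ≤ (F.filter (fun e => ¬ part e.1 = part e.2)).card := hchoice F hex
    have h3 : FI.card + (F.filter (fun e => ¬ part e.1 = part e.2)).card = F.card :=
      Finset.card_filter_add_card_filter_not _
    omega
  have : fas rB = B.card := le_antisymm hrBle hrBge
  omega
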